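/- arXiv:2009.09249 — 4 statements merged into one kernel-verified Lean document; each statement's English description precedes it below -/
import Mathlib

section
/- For every α with 0 < α ≤ 1/2 there exists a constant K > 0 such that: for every natural number I, every real T with 2^I ≤ T, every real C ≥ 1, and all natural numbers C_0, …, C_I with C_i ≥ 1 for each i and ∑_{i=0}^I (C_i − 1) ≤ C − 1, it holds that ∑_{i=0}^I C_i^α · (2^i)^(1−α) ≤ K · C^α · T^(1−α). -/
open Real Finset

theorem stmt_1 (α : ℝ) (hα : 0 < α) (hα' : α ≤ 1 / 2) :
    ∃ K : ℝ, 0 < K ∧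
      ∀ (I : ℕ) (T : ℝ), (2: ℝ) ^ I ≤ T →
        ∀ (C : ℝ), 1 ≤ C →
          ∀ (Ci : Fin (I + 1) → ℕ), (∀ i, 1 ≤ Ci i) →
            (∑ i, ((Ci i : ℝ) - 1)) ≤ C - 1 →
            ∑ i : Fin (I + 1), (Ci i : ℝ) ^ α * ((2 : ℝ) ^ (i : ℕ)) ^ (1 - α)
              ≤ K * C ^ α * T ^ (1 - α) := by
  have hα1 : (0:ℝ) < 1 - α := by linarith
  set r : ℝ := (2:ℝ) ^ (1 - α) with hrdef
  have hr1 : 1 < r := by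
    rw [hrdef]
    exact (Real.one_lt_rpow_iff_of_pos (by norm_num)).mpr (Or.inl ⟨by norm_num, hα1⟩)
  have hr0 : 0 < r := lt_trans one_pos hr1
  have hrm : 0 < r - 1 := by linarith
  refine ⟨r / (r - 1), div_pos hr0 hrm, ?_⟩
  intro I T hT C hC Ci hCi hsum
  have hrpow : ∀ i : ℕ, ((2:ℝ)^i) ^ (1-α) = r ^ i := by
    intro i
    rw [hrdef, ← Real.rpow_natCast (2:ℝ) i, ← Real.rpow_natCast ((2:ℝ) ^ (1-α)) i,
      ← Real.rpow_mul (by norm_num), ← Real.rpow_mul (by norm_num), mul_comm]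
  have hCiC : ∀ i, (Ci i : ℝ) ≤ C := by
    intro i
    have h1 : (Ci i : ℝ) - 1 ≤ ∑ j, ((Ci j : ℝ) - 1) := by
      apply Finset.single_le_sum (f := fun j => (Ci j : ℝ) - 1)
        (fun j _ => by
          have : (1:ℝ) ≤ (Ci j : ℝ) := by exact_mod_cast hCi j
          show (0:ℝ) ≤ (Ci j : ℝ) - 1
          linarith)
        (Finset.mem_univ i)
    linarith
  have hterm : ∀ i : Fin (I+1),
      (Ci i : ℝ) ^ α * ((2:ℝ) ^ (i:ℕ)) ^ (1-α) ≤ C ^ α * r ^ (i:ℕ) := by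
    intro i
    rw [hrpow]
    exact mul_le_mul_of_nonneg_right
      (Real.rpow_le_rpow (Nat.cast_nonneg _) (hCiC i) hα.le)
      (pow_nonneg hr0.le _)
  calc ∑ i : Fin (I + 1), (Ci i : ℝ) ^ α * ((2 : ℝ) ^ (i : ℕ)) ^ (1 - α)
      ≤ ∑ i : Fin (I + 1), C ^ α * r ^ (i:ℕ) := Finset.sum_le_sum (fun i _ => hterm i)
    _ = C ^ α * ∑ i ∈ Finset.range (I+1), r ^ i := by
        rw [← Finset.mul_sum, Fin.sum_univ_eq_sum_range (fun i => r ^ i)]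
    _ = C ^ α * ((r ^ (I+1) - 1) / (r - 1)) := by rw [geom_sum_eq (ne_of_gt hr1)]
    _ ≤ C ^ α * (r ^ (I+1) / (r - 1)) := by
        have hC0 : 0 ≤ C ^ α := Real.rpow_nonneg (by linarith) _
        apply mul_le_mul_of_nonneg_left _ hC0
        gcongr
        linarith
    _ = (r / (r - 1)) * C ^ α * r ^ I := by ring
    _ ≤ (r / (r - 1)) * C ^ α * T ^ (1 - α) := by
        apply mul_le_mul_of_nonneg_left
        · rw [← hrpow]
          exact Real.rpow_le_rpow (by positivity) hT hα1.le
        · positivity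
end

section
/- Exponentially weighted average forecaster: given N ≥ 1 experts, a horizon T ≥ 1, a learning rate η > 0, and losses ℓ_{i,t} ∈ [0,1] for i ∈ {1,…,N}, t ∈ {1,…,T}, define weights p_{i,t} = exp(−η ∑_{s<t} ℓ_{i,s}) / ∑_{j=1}^N exp(−η ∑_{s<t} ℓ_{j,s}). Then ∑_{t=1}^T ∑_{i=1}^N p_{i,t} ℓ_{i,t} − min_{i} ∑_{t=1}^T ℓ_{i,t} ≤ (log N)/η + η·T/8. -/
open Real Finset

lemma hoeffding_scalar (μ : ℝ) (hμ0 : 0 ≤ μ) (hμ1 : μ ≤ 1) (c : ℝ) (hc : c ≤ 0) :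
    Real.log (1 - μ + μ * Real.exp c) ≤ μ * c + c ^ 2 / 8 := by
  set g : ℝ → ℝ := fun x => 1 - μ + μ * Real.exp x with hg
  have gpos : ∀ x, 0 < g x := by
    intro x
    rcases eq_or_lt_of_le hμ0 with h | h
    · simp [hg, ← h]
    · have := Real.exp_pos x
      have : 0 < μ * Real.exp x := by positivity
      simp only [hg]; linarith
  set F : ℝ → ℝ := fun x => x ^ 2 / 8 + μ * x - Real.log (g x) with hF
  set F' : ℝ → ℝ := fun x => x / 4 + μ - μ * Real.exp x / g x with hF'
  have hFderiv : ∀ x, HasDerivAt F (F' x) x := by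
    intro x
    have h1 : HasDerivAt (fun x : ℝ => x ^ 2 / 8) (x / 4) x := by
      have := (hasDerivAt_pow 2 x).div_const 8
      refine this.congr_deriv ?_; push_cast; ring
    have h2 : HasDerivAt (fun x : ℝ => μ * x) μ x := by
      simpa using (hasDerivAt_id x).const_mul μ
    have hgd : HasDerivAt g (μ * Real.exp x) x := by
      exact ((Real.hasDerivAt_exp x).const_mul μ).const_add (1 - μ)
    have h3 : HasDerivAt (fun x => Real.log (g x)) (μ * Real.exp x / g x) x :=
      hgd.log (gpos x).ne'
    exact (h1.add h2).sub h3
  have hF'deriv : ∀ x, HasDerivAt F'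
      (1 / 4 - (μ * Real.exp x * g x - μ * Real.exp x * (μ * Real.exp x)) / (g x) ^ 2) x := by
    intro x
    have h1 : HasDerivAt (fun x : ℝ => x / 4 + μ) (1 / 4) x := by
      simpa using ((hasDerivAt_id x).div_const 4).add_const μ
    have hnum : HasDerivAt (fun x => μ * Real.exp x) (μ * Real.exp x) x :=
      (Real.hasDerivAt_exp x).const_mul μ
    have hgd : HasDerivAt g (μ * Real.exp x) x := by
      exact ((Real.hasDerivAt_exp x).const_mul μ).const_add (1 - μ)
    have h2 := hnum.div hgd (gpos x).ne'
    exact h1.sub h2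
  have hF''nonneg : ∀ x, 0 ≤ 1 / 4 - (μ * Real.exp x * g x - μ * Real.exp x * (μ * Real.exp x)) / (g x) ^ 2 := by
    intro x
    have hg2 : 0 < (g x) ^ 2 := pow_pos (gpos x) 2
    rw [sub_nonneg, div_le_iff₀ hg2]
    nlinarith [sq_nonneg (g x / 2 - μ * Real.exp x)]
  have hF'mono : Monotone F' := by
    apply monotone_of_deriv_nonneg
    · exact fun x => (hF'deriv x).differentiableAt
    · intro x
      rw [(hF'deriv x).deriv]
      exact hF''nonneg x
  have hF'0 : F' 0 = 0 := by simp [hF', hg]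
  have hFanti : AntitoneOn F (Set.Iic 0) := by
    apply antitoneOn_of_deriv_nonpos (convex_Iic 0)
    · exact fun x _ => (hFderiv x).differentiableAt.continuousAt.continuousWithinAt
    · exact fun x _ => (hFderiv x).differentiableAt.differentiableWithinAt
    · intro x hx
      rw [(hFderiv x).deriv]
      have : x ≤ 0 := le_of_lt (by simpa using hx)
      calc F' x ≤ F' 0 := hF'mono this
        _ = 0 := hF'0
  have hF0 : F 0 = 0 := by simp [hF, hg]
  have : F 0 ≤ F c := hFanti (Set.mem_Iic.mpr hc) (Set.mem_Iic.mpr le_rfl) hc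
  rw [hF0] at this
  simp only [hF] at this
  linarith


theorem stmt_5 (N T : ℕ) (hN : 1 ≤ N) (hT : 1 ≤ T)
    (η : ℝ) (hη : 0 < η)
    (ℓ : Fin N → ℕ → ℝ) (hℓ : ∀ i t, t < T → ℓ i t ∈ Set.Icc (0 : ℝ) 1)
    (p : Fin N → ℕ → ℝ)
    (hp : ∀ i t, p i t =
      Real.exp (-η * ∑ s ∈ Finset.range t, ℓ i s) /
        ∑ j, Real.exp (-η * ∑ s ∈ Finset.range t, ℓ j s)) :
    ∑ t ∈ Finset.range T, ∑ i, p i t * ℓ i t -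
        Finset.univ.inf' (Finset.univ_nonempty_iff.mpr (Fin.pos_iff_nonempty.mp hN))
          (fun i => ∑ t ∈ Finset.range T, ℓ i t)
      ≤ Real.log N / η + η * T / 8 := by
  have hNpos : 0 < N := hN
  have hne : (Finset.univ : Finset (Fin N)).Nonempty :=
    Finset.univ_nonempty_iff.mpr (Fin.pos_iff_nonempty.mp hN)
  set L : Fin N → ℕ → ℝ := fun i t => ∑ s ∈ Finset.range t, ℓ i s with hL
  set W : ℕ → ℝ := fun t => ∑ j, Real.exp (-η * L j t) with hW
  have hWpos : ∀ t, 0 < W t :=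
    fun t => Finset.sum_pos (fun j _ => Real.exp_pos _) hne
  have hpsum : ∀ t, ∑ i, p i t = 1 := by
    intro t
    simp only [hp]
    rw [← Finset.sum_div]
    exact div_self (hWpos t).ne'
  have hpnonneg : ∀ i t, 0 ≤ p i t := by
    intro i t
    rw [hp]
    positivity
  -- per-step bound
  have step : ∀ t < T, Real.log (W (t + 1)) ≤
      Real.log (W t) - η * (∑ i, p i t * ℓ i t) + η ^ 2 / 8 := by
    intro t ht
    set μ : ℝ := ∑ i, p i t * ℓ i t with hμ
    have hμ0 : 0 ≤ μ := Finset.sum_nonneg fun i _ =>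
      mul_nonneg (hpnonneg i t) (hℓ i t ht).1
    have hμ1 : μ ≤ 1 := by
      calc μ ≤ ∑ i, p i t * 1 :=
            Finset.sum_le_sum fun i _ =>
              mul_le_mul_of_nonneg_left (hℓ i t ht).2 (hpnonneg i t)
        _ = 1 := by simp [hpsum t]
    have hWsucc : W (t + 1) = W t * ∑ j, p j t * Real.exp (-η * ℓ j t) := by
      rw [Finset.mul_sum]
      apply Finset.sum_congr rfl
      intro j _
      rw [hp]
      have : L j (t + 1) = L j t + ℓ j t := by
        simp [hL, Finset.sum_range_succ]
      rw [this]
      field_simp [(hWpos t).ne']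
      rw [mul_assoc, ← Real.exp_add]
      simp only [hW, hL, neg_mul]
      ring_nf
    have hconv : ∀ j, Real.exp (-η * ℓ j t) ≤
        1 - ℓ j t + ℓ j t * Real.exp (-η) := by
      intro j
      have hx0 := (hℓ j t ht).1
      have hx1 := (hℓ j t ht).2
      have := convexOn_exp.2 (Set.mem_univ (-η)) (Set.mem_univ (0 : ℝ))
        hx0 (by linarith : (0:ℝ) ≤ 1 - ℓ j t) (by ring : ℓ j t + (1 - ℓ j t) = 1)
      simp only [smul_eq_mul, mul_zero, add_zero, Real.exp_zero, mul_one] at this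
      calc Real.exp (-η * ℓ j t) = Real.exp (ℓ j t * (-η)) := by ring_nf
        _ ≤ ℓ j t * Real.exp (-η) + (1 - ℓ j t) := this
        _ = 1 - ℓ j t + ℓ j t * Real.exp (-η) := by ring
    have hsum_le : ∑ j, p j t * Real.exp (-η * ℓ j t) ≤ 1 - μ + μ * Real.exp (-η) := by
      calc ∑ j, p j t * Real.exp (-η * ℓ j t)
          ≤ ∑ j, p j t * (1 - ℓ j t + ℓ j t * Real.exp (-η)) :=
            Finset.sum_le_sum fun j _ =>
              mul_le_mul_of_nonneg_left (hconv j) (hpnonneg j t)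
        _ = (∑ j, p j t) - μ + μ * Real.exp (-η) := by
            simp only [mul_add, mul_sub, mul_one, Finset.sum_add_distrib,
              Finset.sum_sub_distrib, hμ, Finset.sum_mul, ← Finset.sum_mul]
            ring_nf
            rw [Finset.sum_mul]
        _ = 1 - μ + μ * Real.exp (-η) := by rw [hpsum t]
    have hbase_pos : 0 < 1 - μ + μ * Real.exp (-η) := by
      rcases eq_or_lt_of_le hμ0 with h | h
      · simp [← h]
      · have := Real.exp_pos (-η)
        nlinarith
    have hlog : Real.log (1 - μ + μ * Real.exp (-η)) ≤ μ * (-η) + (-η) ^ 2 / 8 :=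
      hoeffding_scalar μ hμ0 hμ1 (-η) (by linarith)
    have hWsucc_le : W (t + 1) ≤ W t * Real.exp (-η * μ + η ^ 2 / 8) := by
      rw [hWsucc]
      apply mul_le_mul_of_nonneg_left _ (hWpos t).le
      calc ∑ j, p j t * Real.exp (-η * ℓ j t) ≤ 1 - μ + μ * Real.exp (-η) := hsum_le
        _ = Real.exp (Real.log (1 - μ + μ * Real.exp (-η))) := (Real.exp_log hbase_pos).symm
        _ ≤ Real.exp (-η * μ + η ^ 2 / 8) := by
            apply Real.exp_le_exp.mpr
            calc Real.log (1 - μ + μ * Real.exp (-η)) ≤ μ * (-η) + (-η) ^ 2 / 8 := hlog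
              _ = -η * μ + η ^ 2 / 8 := by ring
    calc Real.log (W (t + 1)) ≤ Real.log (W t * Real.exp (-η * μ + η ^ 2 / 8)) :=
          Real.log_le_log (hWpos (t + 1)) hWsucc_le
      _ = Real.log (W t) + (-η * μ + η ^ 2 / 8) := by
          rw [Real.log_mul (hWpos t).ne' (Real.exp_pos _).ne', Real.log_exp]
      _ = Real.log (W t) - η * μ + η ^ 2 / 8 := by ring
  -- telescoping
  have tele : ∀ n ≤ T, Real.log (W n) ≤ Real.log (W 0)
      - η * ∑ t ∈ Finset.range n, ∑ i, p i t * ℓ i t + n * (η ^ 2 / 8) := by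
    intro n hn
    induction n with
    | zero => simp
    | succ m ih =>
      have hm : m ≤ T := le_of_lt (Nat.lt_of_succ_le hn)
      have := step m (Nat.lt_of_succ_le hn)
      have ihm := ih hm
      rw [Finset.sum_range_succ]
      push_cast
      linarith
  have hW0 : Real.log (W 0) = Real.log N := by
    simp [hW, hL]
  -- lower bound via best expert
  obtain ⟨i0, _, hi0⟩ := Finset.exists_mem_eq_inf' hne
    (fun i => ∑ t ∈ Finset.range T, ℓ i t)
  have hlower : -η * (∑ t ∈ Finset.range T, ℓ i0 t) ≤ Real.log (W T) := by
    rw [← Real.log_exp (-η * (∑ t ∈ Finset.range T, ℓ i0 t))]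
    apply Real.log_le_log (Real.exp_pos _)
    exact Finset.single_le_sum (f := fun j => Real.exp (-η * L j T))
      (fun j _ => (Real.exp_pos _).le) (Finset.mem_univ i0)
  have key := tele T le_rfl
  rw [hW0] at key
  rw [hi0]
  set S := ∑ t ∈ Finset.range T, ∑ i, p i t * ℓ i t
  set M := ∑ t ∈ Finset.range T, ℓ i0 t
  have hcomb : -η * M ≤ Real.log N - η * S + T * (η ^ 2 / 8) := le_trans hlower key
  rw [← mul_le_mul_iff_right₀ hη]
  have h1 : η * (Real.log N / η) = Real.log N := mul_div_cancel₀ _ hη.ne'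
  nlinarith [hcomb]
end

section
/- Fixed-share (switching) forecaster: given N ≥ 2 experts, a horizon T ≥ 1, losses ℓ_{i,t} ∈ [0,1], a learning rate η > 0 and a sharing parameter σ ∈ (0,1), define p_{i,1} = 1/N and p_{i,t+1} = (1−σ)·p_{i,t}·exp(−η ℓ_{i,t})/Z_t + σ/N, where Z_t = ∑_{j=1}^N p_{j,t}·exp(−η ℓ_{j,t}). Then for every comparator sequence i_1, …, i_T ∈ {1,…,N} with s = |{t < T : i_{t+1} ≠ i_t}| switches: ∑_{t=1}^T ∑_{j=1}^N p_{j,t} ℓ_{j,t} − ∑_{t=1}^T ℓ_{i_t,t} ≤ ( (s+1)·log N + s·log(1/σ) + (T−1−s)·log(1/(1−σ)) )/η + η·T/8. -/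
open Real Finset

lemma hoeff_bern (q η : ℝ) (hq0 : 0 ≤ q) (hq1 : q ≤ 1) (hη : 0 ≤ η) :
    Real.log (1 - q + q * Real.exp (-η)) ≤ -(η * q) + η ^ 2 / 8 := by
  have hD : ∀ x : ℝ, 0 < q + (1 - q) * Real.exp x := by
    intro x
    rcases lt_or_ge q 1 with h | h
    · have : 0 < (1 - q) * Real.exp x := mul_pos (by linarith) (Real.exp_pos x)
      linarith
    · have hq1' : q = 1 := le_antisymm hq1 h
      rw [hq1']; norm_num
  set D : ℝ → ℝ := fun x => q + (1 - q) * Real.exp x with hDdef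
  have hD' : ∀ x : ℝ, HasDerivAt D ((1 - q) * Real.exp x) x := by
    intro x
    exact ((Real.hasDerivAt_exp x).const_mul (1 - q)).const_add q
  set H : ℝ → ℝ := fun x => (1 - q) + x / 4 - (1 - q) * Real.exp x / D x with hHdef
  have hH' : ∀ x : ℝ, HasDerivAt H
      (1 / 4 - ((1 - q) * Real.exp x * D x - (1 - q) * Real.exp x * ((1 - q) * Real.exp x)) / D x ^ 2) x := by
    intro x
    have h1 : HasDerivAt (fun x => (1 - q) * Real.exp x) ((1 - q) * Real.exp x) x :=
      (Real.hasDerivAt_exp x).const_mul (1 - q)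
    have h2 := h1.div (hD' x) (hD x).ne'
    have h3 : HasDerivAt (fun x : ℝ => (1 - q) + x / 4) (1 / 4) x := by
      simpa using ((hasDerivAt_id x).div_const 4).const_add (1 - q)
    exact h3.sub h2
  have hHmono : Monotone H := by
    apply monotone_of_deriv_nonneg (fun x => (hH' x).differentiableAt)
    intro x
    rw [(hH' x).deriv]
    have h1 : 0 < D x := hD x
    have h2 : 0 < Real.exp x := Real.exp_pos x
    have h3 : ((1 - q) * Real.exp x * D x - (1 - q) * Real.exp x * ((1 - q) * Real.exp x)) / D x ^ 2
        ≤ 1 / 4 := by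
      rw [div_le_iff₀ (by positivity)]
      have hDx : D x = q + (1 - q) * Real.exp x := rfl
      nlinarith [sq_nonneg (q - (1 - q) * Real.exp x)]
    linarith
  have hH0 : H 0 = 0 := by
    simp only [hHdef, hDdef, Real.exp_zero, mul_one]
    have : q + (1 - q) = 1 := by ring
    rw [this]
    norm_num
  set G : ℝ → ℝ := fun x => (1 - q) * x + x ^ 2 / 8 - Real.log (D x) with hGdef
  have hG' : ∀ x : ℝ, HasDerivAt G (H x) x := by
    intro x
    have hlog : HasDerivAt (fun x => Real.log (D x)) ((1 - q) * Real.exp x / D x) x :=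
      (hD' x).log (hD x).ne'
    have hpoly : HasDerivAt (fun x : ℝ => (1 - q) * x + x ^ 2 / 8) ((1 - q) + x / 4) x := by
      have := ((hasDerivAt_id x).const_mul (1 - q)).add ((hasDerivAt_pow 2 x).div_const 8)
      refine this.congr_deriv ?_
      ring
    exact hpoly.sub hlog
  have hGd : Differentiable ℝ G := fun x => (hG' x).differentiableAt
  have hGmono : MonotoneOn G (Set.Ici 0) := by
    apply monotoneOn_of_deriv_nonneg (convex_Ici 0) hGd.continuous.continuousOn
      hGd.differentiableOn
    intro x hx
    rw [(hG' x).deriv]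
    rw [interior_Ici] at hx
    have := hHmono (le_of_lt hx)
    rw [hH0] at this
    exact this
  have hG0 : G 0 = 0 := by
    simp only [hGdef, hDdef, Real.exp_zero, mul_one]
    have : q + (1 - q) = 1 := by ring
    rw [this]
    simp
  have hGη : 0 ≤ G η := by
    have := hGmono Set.self_mem_Ici (Set.mem_Ici.2 hη) hη
    rw [hG0] at this; exact this
  have hkey : 1 - q + q * Real.exp (-η) = Real.exp (-η) * D η := by
    simp only [hDdef]
    have h1 : Real.exp (-η) * Real.exp η = 1 := by
      rw [← Real.exp_add]; norm_num
    nlinarith [h1]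
  rw [hkey, Real.log_mul (Real.exp_ne_zero _) (hD η).ne', Real.log_exp]
  simp only [hGdef] at hGη
  nlinarith [hGη]

lemma hoeff_sum {N : ℕ} [NeZero N] (w x : Fin N → ℝ) (η : ℝ) (hη : 0 ≤ η)
    (hw : ∀ i, 0 < w i) (hw1 : ∑ i, w i = 1)
    (hx0 : ∀ i, 0 ≤ x i) (hx1 : ∀ i, x i ≤ 1) :
    Real.log (∑ i, w i * Real.exp (-η * x i))
      ≤ -(η * ∑ i, w i * x i) + η ^ 2 / 8 := by
  set X := ∑ i, w i * x i with hX
  have hX0 : 0 ≤ X := Finset.sum_nonneg fun i _ => mul_nonneg (hw i).le (hx0 i)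
  have hX1 : X ≤ 1 := by
    rw [← hw1]
    exact Finset.sum_le_sum fun i _ => by
      nlinarith [hw i, hx1 i, hx0 i]
  have hpt : ∀ i, Real.exp (-η * x i) ≤ (1 - x i) + x i * Real.exp (-η) := by
    intro i
    have := convexOn_exp.2 (Set.mem_univ (0 : ℝ)) (Set.mem_univ (-η))
      (by linarith [hx1 i] : (0:ℝ) ≤ 1 - x i) (hx0 i) (by ring)
    simpa [smul_eq_mul, mul_comm] using this
  have hsum : ∑ i, w i * Real.exp (-η * x i) ≤ 1 - X + X * Real.exp (-η) := by
    have h1 : ∑ i, w i * Real.exp (-η * x i)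
        ≤ ∑ i, w i * ((1 - x i) + x i * Real.exp (-η)) :=
      Finset.sum_le_sum fun i _ => mul_le_mul_of_nonneg_left (hpt i) (hw i).le
    have h2 : ∑ i, w i * ((1 - x i) + x i * Real.exp (-η))
        = 1 - X + X * Real.exp (-η) := by
      have he : ∑ i, w i * ((1 - x i) + x i * Real.exp (-η))
          = (∑ i, w i) - (∑ i, w i * x i) + (∑ i, w i * x i) * Real.exp (-η) := by
        rw [Finset.sum_mul, ← Finset.sum_sub_distrib, ← Finset.sum_add_distrib]
        exact Finset.sum_congr rfl fun i _ => by ring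
      rw [he, hw1, hX]
    linarith
  have hpos : 0 < ∑ i, w i * Real.exp (-η * x i) :=
    Finset.sum_pos (fun i _ => mul_pos (hw i) (Real.exp_pos _)) Finset.univ_nonempty
  calc Real.log (∑ i, w i * Real.exp (-η * x i))
      ≤ Real.log (1 - X + X * Real.exp (-η)) := Real.log_le_log hpos hsum
    _ ≤ -(η * X) + η ^ 2 / 8 := hoeff_bern X η hX0 hX1 hη

lemma log_step (cc a x Z P : ℝ) (hcc : 0 < cc) (ha : 0 < a) (hZ : 0 < Z)
    (hP : cc * (a * Real.exp x / Z) ≤ P) :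
    Real.log cc + Real.log a + x - Real.log Z ≤ Real.log P := by
  have hq1 : 0 < a * Real.exp x / Z := by positivity
  have hq2 : 0 < a * Real.exp x := by positivity
  have hpos : 0 < cc * (a * Real.exp x / Z) := by positivity
  have h := Real.log_le_log hpos hP
  rw [Real.log_mul hcc.ne' hq1.ne', Real.log_div hq2.ne' hZ.ne',
    Real.log_mul ha.ne' (Real.exp_ne_zero _), Real.log_exp] at h
  linarith

theorem stmt_7 (N T : ℕ) (hN : 2 ≤ N) (hT : 1 ≤ T)
    (ℓ : Fin N → ℕ → ℝ) (hℓ : ∀ i t, t < T → ℓ i t ∈ Set.Icc (0 : ℝ) 1)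
    (η σ : ℝ) (hη : 0 < η) (hσ : σ ∈ Set.Ioo (0 : ℝ) 1)
    (p : Fin N → ℕ → ℝ)
    (hp0 : ∀ i, p i 0 = 1 / N)
    (hp : ∀ i t, p i (t + 1) =
      (1 - σ) * p i t * Real.exp (-η * ℓ i t) /
          (∑ j, p j t * Real.exp (-η * ℓ j t)) + σ / N)
    (it : ℕ → Fin N) (s : ℕ)
    (hs : s = ((Finset.range (T - 1)).filter (fun t => it (t + 1) ≠ it t)).card) :
    ∑ t ∈ Finset.range T, ∑ j, p j t * ℓ j t - ∑ t ∈ Finset.range T, ℓ (it t) t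
      ≤ (((s : ℝ) + 1) * Real.log N + (s : ℝ) * Real.log (1 / σ) +
            ((T : ℝ) - 1 - (s : ℝ)) * Real.log (1 / (1 - σ))) / η
        + η * T / 8 := by
  haveI : NeZero N := ⟨by omega⟩
  have hNR : (0 : ℝ) < N := by
    have : 0 < N := by omega
    exact_mod_cast this
  obtain ⟨hσ0, hσ1⟩ := hσ
  set Z : ℕ → ℝ := fun t => ∑ j, p j t * Real.exp (-η * ℓ j t) with hZdef
  have hZeq : ∀ t, (∑ j, p j t * Real.exp (-η * ℓ j t)) = Z t := fun t => rfl
  -- positivity of weights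
  have hppos : ∀ t, ∀ j, 0 < p j t := by
    intro t
    induction t with
    | zero => intro j; rw [hp0]; exact div_pos one_pos hNR
    | succ t ih =>
      intro j
      rw [hp]
      have hZ : 0 < ∑ j, p j t * Real.exp (-η * ℓ j t) :=
        Finset.sum_pos (fun j _ => mul_pos (ih j) (Real.exp_pos _)) Finset.univ_nonempty
      have h1 : 0 ≤ (1 - σ) * p j t * Real.exp (-η * ℓ j t) /
          (∑ j, p j t * Real.exp (-η * ℓ j t)) :=
        div_nonneg (mul_nonneg (mul_nonneg (by linarith) (ih j).le) (Real.exp_pos _).le) hZ.le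
      have h2 : 0 < σ / N := div_pos hσ0 hNR
      linarith
  have hZpos : ∀ t, 0 < Z t := fun t =>
    Finset.sum_pos (fun j _ => mul_pos (hppos t j) (Real.exp_pos _)) Finset.univ_nonempty
  -- weights sum to one
  have hpsum : ∀ t, ∑ j, p j t = 1 := by
    intro t
    induction t with
    | zero =>
      rw [Finset.sum_congr rfl (fun j _ => hp0 j), Finset.sum_const, Finset.card_univ,
        Fintype.card_fin, nsmul_eq_mul]
      field_simp
    | succ t _ =>
      calc ∑ j, p j (t + 1)
          = ∑ j, ((1 - σ) * (p j t * Real.exp (-η * ℓ j t)) / Z t + σ / N) :=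
            Finset.sum_congr rfl fun j _ => by rw [hp, hZeq]; ring
        _ = (1 - σ) * (∑ j, p j t * Real.exp (-η * ℓ j t)) / Z t + (N : ℝ) * (σ / N) := by
            rw [Finset.sum_add_distrib, Finset.sum_const, Finset.card_univ, Fintype.card_fin,
              nsmul_eq_mul, ← Finset.sum_div, ← Finset.mul_sum]
        _ = 1 := by
            rw [hZeq, mul_div_assoc, div_self (hZpos t).ne']
            field_simp
            ring
  -- the per-step comparator weight lower bound, in log form
  set c : ℕ → ℝ := fun t => if it (t + 1) = it t then Real.log (1 - σ) else Real.log (σ / N)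
    with hcdef
  have hstep : ∀ t, Real.log (p (it t) t) + c t + (-η * ℓ (it t) t) - Real.log (Z t)
      ≤ Real.log (p (it (t + 1)) (t + 1)) := by
    intro t
    by_cases h : it (t + 1) = it t
    · have hc : c t = Real.log (1 - σ) := if_pos h
      have hP : (1 - σ) * (p (it t) t * Real.exp (-η * ℓ (it t) t) / Z t)
          ≤ p (it (t + 1)) (t + 1) := by
        rw [h, hp, hZeq]
        have h2 : 0 < σ / N := div_pos hσ0 hNR
        have : (1 - σ) * (p (it t) t * Real.exp (-η * ℓ (it t) t) / Z t)
            = (1 - σ) * p (it t) t * Real.exp (-η * ℓ (it t) t) / Z t := by ring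
        linarith [this.le]
      have := log_step (1 - σ) (p (it t) t) (-η * ℓ (it t) t) (Z t) _ (by linarith)
        (hppos t _) (hZpos t) hP
      rw [hc]; linarith
    · have hc : c t = Real.log (σ / N) := if_neg h
      have hone : p (it t) t * Real.exp (-η * ℓ (it t) t) / Z t ≤ 1 := by
        rw [div_le_one (hZpos t)]
        exact Finset.single_le_sum
          (f := fun j => p j t * Real.exp (-η * ℓ j t))
          (fun j _ => mul_nonneg (hppos t j).le (Real.exp_pos _).le) (Finset.mem_univ _)
      have hP : (σ / N) * (p (it t) t * Real.exp (-η * ℓ (it t) t) / Z t)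
          ≤ p (it (t + 1)) (t + 1) := by
        have h2 : 0 < σ / N := div_pos hσ0 hNR
        have h3 : (σ / N) * (p (it t) t * Real.exp (-η * ℓ (it t) t) / Z t) ≤ σ / N := by
          nlinarith [hone, h2]
        have h4 : 0 ≤ (1 - σ) * p (it (t + 1)) t * Real.exp (-η * ℓ (it (t + 1)) t) /
            (∑ j, p j t * Real.exp (-η * ℓ j t)) :=
          div_nonneg (mul_nonneg (mul_nonneg (by linarith) (hppos t _).le)
            (Real.exp_pos _).le) (by rw [hZeq]; exact (hZpos t).le)
        rw [hp]
        linarith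
      have := log_step (σ / N) (p (it t) t) (-η * ℓ (it t) t) (Z t) _
        (div_pos hσ0 hNR) (hppos t _) (hZpos t) hP
      rw [hc]; linarith
  -- telescoping
  have htel : ∀ n, Real.log (p (it 0) 0)
      + ∑ t ∈ Finset.range n, (c t + (-η * ℓ (it t) t) - Real.log (Z t))
      ≤ Real.log (p (it n) n) := by
    intro n
    induction n with
    | zero => simp
    | succ n ih =>
      rw [Finset.sum_range_succ]
      linarith [hstep n]
  -- last round
  have hfin : Real.log (p (it (T - 1)) (T - 1)) + (-η * ℓ (it (T - 1)) (T - 1))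
      - Real.log (Z (T - 1)) ≤ 0 := by
    have hle : p (it (T - 1)) (T - 1) * Real.exp (-η * ℓ (it (T - 1)) (T - 1)) ≤ Z (T - 1) :=
      Finset.single_le_sum (f := fun j => p j (T - 1) * Real.exp (-η * ℓ j (T - 1)))
        (fun j _ => mul_nonneg (hppos _ j).le (Real.exp_pos _).le) (Finset.mem_univ _)
    have h := Real.log_le_log (mul_pos (hppos _ _) (Real.exp_pos _)) hle
    rw [Real.log_mul (hppos _ _).ne' (Real.exp_ne_zero _), Real.log_exp] at h
    linarith
  have hT1 : T - 1 + 1 = T := by omega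
  have hsplit : ∀ f : ℕ → ℝ, ∑ t ∈ Finset.range T, f t
      = ∑ t ∈ Finset.range (T - 1), f t + f (T - 1) := by
    intro f
    have := Finset.sum_range_succ f (T - 1)
    rw [hT1] at this
    exact this
  -- combined weight bound
  have hmain : Real.log (p (it 0) 0) + (∑ t ∈ Finset.range (T - 1), c t)
      + (∑ t ∈ Finset.range T, (-η * ℓ (it t) t)) - (∑ t ∈ Finset.range T, Real.log (Z t))
      ≤ 0 := by
    have e1 := htel (T - 1)
    have e2 : ∑ t ∈ Finset.range (T - 1), (c t + (-η * ℓ (it t) t) - Real.log (Z t))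
        = (∑ t ∈ Finset.range (T - 1), c t) + (∑ t ∈ Finset.range (T - 1), (-η * ℓ (it t) t))
          - (∑ t ∈ Finset.range (T - 1), Real.log (Z t)) := by
      rw [Finset.sum_sub_distrib, Finset.sum_add_distrib]
    have e3 := hsplit (fun t => -η * ℓ (it t) t)
    have e4 := hsplit (fun t => Real.log (Z t))
    rw [e2] at e1
    linarith [hfin]
  -- Hoeffding per round and summed
  have hHo : ∀ t ∈ Finset.range T, η * (∑ j, p j t * ℓ j t)
      ≤ -Real.log (Z t) + η ^ 2 / 8 := by
    intro t ht
    rw [Finset.mem_range] at ht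
    have := hoeff_sum (fun j => p j t) (fun j => ℓ j t) η hη.le (fun j => hppos t j)
      (hpsum t) (fun j => (hℓ j t ht).1) (fun j => (hℓ j t ht).2)
    rw [hZeq] at this
    linarith
  have hHoSum : η * (∑ t ∈ Finset.range T, ∑ j, p j t * ℓ j t)
      ≤ -(∑ t ∈ Finset.range T, Real.log (Z t)) + T * (η ^ 2 / 8) := by
    rw [Finset.mul_sum]
    calc ∑ t ∈ Finset.range T, η * ∑ j, p j t * ℓ j t
        ≤ ∑ t ∈ Finset.range T, (-Real.log (Z t) + η ^ 2 / 8) := Finset.sum_le_sum hHo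
      _ = -(∑ t ∈ Finset.range T, Real.log (Z t)) + T * (η ^ 2 / 8) := by
          rw [Finset.sum_add_distrib, Finset.sum_const, Finset.card_range, nsmul_eq_mul,
            ← Finset.sum_neg_distrib]
  -- evaluate the sum of switching constants
  have hsle : s ≤ T - 1 := by
    rw [hs]
    exact le_trans (Finset.card_filter_le _ _) (le_of_eq (Finset.card_range _))
  have hA : ∑ t ∈ Finset.range (T - 1), c t
      = (s : ℝ) * Real.log (σ / N) + (((T - 1) - s : ℕ) : ℝ) * Real.log (1 - σ) := by
    rw [← Finset.sum_filter_add_sum_filter_not (Finset.range (T - 1))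
      (fun t => it (t + 1) ≠ it t) c]
    have h1 : ∑ t ∈ (Finset.range (T - 1)).filter (fun t => it (t + 1) ≠ it t), c t
        = (s : ℝ) * Real.log (σ / N) := by
      rw [Finset.sum_congr rfl (fun t ht => if_neg (Finset.mem_filter.1 ht).2),
        Finset.sum_const, nsmul_eq_mul, hs]
    have h2 : ∑ t ∈ (Finset.range (T - 1)).filter (fun t => ¬ it (t + 1) ≠ it t), c t
        = (((T - 1) - s : ℕ) : ℝ) * Real.log (1 - σ) := by
      rw [Finset.sum_congr rfl (fun t ht => if_pos (not_not.1 (Finset.mem_filter.1 ht).2)),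
        Finset.sum_const, nsmul_eq_mul]
      congr 2
      have hnn : (Finset.range (T - 1)).filter (fun t => ¬ it (t + 1) ≠ it t)
          = Finset.range (T - 1) \ (Finset.range (T - 1)).filter (fun t => it (t + 1) ≠ it t) :=
        Finset.filter_not _ _
      rw [hnn, Finset.card_sdiff_of_subset (Finset.filter_subset _ _), Finset.card_range, hs]
    rw [h1, h2]
  -- cast arithmetic
  have hcast : (((T - 1) - s : ℕ) : ℝ) = (T : ℝ) - 1 - s := by
    rw [Nat.cast_sub hsle, Nat.cast_sub hT]
    push_cast
    ring
  have hlog1 : Real.log (p (it 0) 0) = -Real.log N := by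
    rw [hp0, one_div, Real.log_inv]
  have hlog2 : Real.log (σ / (N : ℝ)) = Real.log σ - Real.log N :=
    Real.log_div hσ0.ne' hNR.ne'
  have hlog3 : Real.log (1 / σ) = -Real.log σ := by rw [one_div, Real.log_inv]
  have hlog4 : Real.log (1 / (1 - σ)) = -Real.log (1 - σ) := by rw [one_div, Real.log_inv]
  have hK : -Real.log (p (it 0) 0) - ∑ t ∈ Finset.range (T - 1), c t
      = ((s : ℝ) + 1) * Real.log N + (s : ℝ) * Real.log (1 / σ)
        + ((T : ℝ) - 1 - (s : ℝ)) * Real.log (1 / (1 - σ)) := by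
    rw [hA, hcast, hlog1, hlog2, hlog3, hlog4]
    ring
  have hM : ∑ t ∈ Finset.range T, (-η * ℓ (it t) t)
      = -η * ∑ t ∈ Finset.range T, ℓ (it t) t := by
    rw [← Finset.mul_sum]
  -- put everything together
  set K := ((s : ℝ) + 1) * Real.log N + (s : ℝ) * Real.log (1 / σ)
      + ((T : ℝ) - 1 - (s : ℝ)) * Real.log (1 / (1 - σ)) with hKdef
  set L := ∑ t ∈ Finset.range T, ∑ j, p j t * ℓ j t with hLdef
  set M := ∑ t ∈ Finset.range T, ℓ (it t) t with hMdef
  clear_value Z c K L M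
  have hfinal : η * L ≤ K + η * M + T * (η ^ 2 / 8) := by
    rw [hM] at hmain
    have hMM : -η * M = -(η * M) := by ring
    rw [hMM] at hmain
    have h1 : -(∑ t ∈ Finset.range T, Real.log (Z t)) ≤ K + η * M := by linarith [hmain, hK]
    linarith [hHoSum, h1]
  have hdiv : η * (L - M) ≤ η * (K / η + η * T / 8) := by
    have : η * (K / η + η * T / 8) = K + η ^ 2 * T / 8 := by
      field_simp
    rw [this]
    nlinarith [hfinal]
  have := le_of_mul_le_mul_left hdiv hη
  linarith
end

section
/- Let T ≥ 2 and s be reals with 1 ≤ s ≤ T/2, let σ = s/T and η = √(s·log(T/s)/T). Then η·T/8 + ( s·log(T/s) + (T−1−s)·log(1/(1−σ)) )/η ≤ 4·√(s·T·log(T/s)). -/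
open Real

theorem stmt_8 (T s : ℝ) (hT : 2 ≤ T) (hs1 : 1 ≤ s) (hs2 : s ≤ T / 2)
    (σ η : ℝ) (hσ : σ = s / T) (hη : η = Real.sqrt (s * Real.log (T / s) / T)) :
    η * T / 8 + (s * Real.log (T / s) + (T - 1 - s) * Real.log (1 / (1 - σ))) / η
      ≤ 4 * Real.sqrt (s * T * Real.log (T / s)) := by
  have hT0 : (0:ℝ) < T := by linarith
  have hs0 : (0:ℝ) < s := by linarith
  set L := Real.log (T / s) with hLdef
  have hTs : (2:ℝ) ≤ T / s := by rw [le_div_iff₀ hs0]; linarith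
  have hL2 : Real.log 2 ≤ L := Real.log_le_log (by norm_num) hTs
  have hlog2 : (0.6931471803:ℝ) < Real.log 2 := Real.log_two_gt_d9
  have hL0 : 0 < L := by linarith
  have hx0 : 0 < s * L / T := by positivity
  have hη0 : 0 < η := by rw [hη]; exact Real.sqrt_pos.mpr hx0
  have hηsq : η ^ 2 = s * L / T := by rw [hη, Real.sq_sqrt hx0.le]
  have hTsub : 0 < T - s := by linarith
  have hone : 1 - σ = (T - s) / T := by rw [hσ]; field_simp
  have h1σ : 0 < 1 - σ := by rw [hone]; positivity
  have hlogE : Real.log (1 / (1 - σ)) ≤ s / (T - s) := by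
    have h1 := Real.log_le_sub_one_of_pos (show (0:ℝ) < 1 / (1 - σ) by positivity)
    have h2 : 1 / (1 - σ) - 1 = s / (T - s) := by rw [hone]; field_simp; ring
    linarith
  have hTs1 : 0 ≤ T - 1 - s := by linarith
  have hE : (T - 1 - s) * Real.log (1 / (1 - σ)) ≤ s := by
    calc (T - 1 - s) * Real.log (1 / (1 - σ)) ≤ (T - 1 - s) * (s / (T - s)) :=
          mul_le_mul_of_nonneg_left hlogE hTs1
      _ ≤ (T - s) * (s / (T - s)) := by
          apply mul_le_mul_of_nonneg_right (by linarith) (by positivity)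
      _ = s := by field_simp
  have hRHS : Real.sqrt (s * T * L) = η * T := by
    rw [hη, show s * T * L = (s * L / T) * T ^ 2 by field_simp,
      Real.sqrt_mul hx0.le, Real.sqrt_sq hT0.le]
  rw [hRHS]
  have hkey : (s * L + (T - 1 - s) * Real.log (1 / (1 - σ))) / η ≤ (s * L + s) / η := by
    gcongr
  have hη2T : η ^ 2 * T = s * L := by rw [hηsq]; field_simp
  have hfin : (s * L + s) / η ≤ (31/8) * (η * T) := by
    rw [div_le_iff₀ hη0]
    nlinarith [hη2T, hL0, hs0, hη0, hT0, mul_pos hs0 hL0]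
  linarith
end
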